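/- For every θ in the interior of Θ and every θ' ∈ Θ, the functions x ↦ q_θ(x) Γ(x) and x ↦ q_θ(x) · log(q_θ(x)/q_{θ'}(x)) are ν-integrable, and the Kullback–Leibler divergence between q_θ and q_{θ'} equals the Bregman divergence of A between the parameters: ∫ q_θ(x) log(q_θ(x)/q_{θ'}(x)) ν(dx) = A(θ') − A(θ) − ⟨m_θ, θ' − θ⟩, where m_θ = ∫ q_θ(x) Γ(x) ν(dx) is the gradient of A at θ. -/

import Mathlib

open MeasureTheory Real
open scoped RealInnerProductSpace

lemma aux_integrable_exp_smul {X : Type*} [MeasurableSpace X] {ν : Measure X}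
    {H : Type*} [NormedAddCommGroup H] [InnerProductSpace ℝ H] [FiniteDimensional ℝ H]
    [MeasurableSpace H] [BorelSpace H]
    {Γ : X → H} (hΓ : Measurable Γ) {θ : H} {ε : ℝ} (hε : 0 < ε)
    (hint : ∀ η : H, dist η θ < ε → Integrable (fun x => exp ⟪η, Γ x⟫) ν) :
    Integrable (fun x => exp ⟪θ, Γ x⟫ • Γ x) ν := by
  set s : ℝ := ε / 2 with hs
  have hs0 : 0 < s := by positivity
  set b := stdOrthonormalBasis ℝ H with hb
  have hmem : ∀ i, dist (θ + s • b i) θ < ε ∧ dist (θ - s • b i) θ < ε := by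
    intro i
    have hbn : ‖b i‖ = 1 := b.orthonormal.1 i
    constructor
    · have h : θ + s • b i - θ = s • b i := by abel
      rw [dist_eq_norm, h, norm_smul, hbn, mul_one, Real.norm_eq_abs, abs_of_pos hs0]
      linarith
    · have h : θ - s • b i - θ = -(s • b i) := by abel
      rw [dist_eq_norm, h, norm_neg, norm_smul, hbn, mul_one, Real.norm_eq_abs,
        abs_of_pos hs0]
      linarith
  have hgint : Integrable (fun x => ∑ i, (1 / s) *
      (exp ⟪θ + s • b i, Γ x⟫ + exp ⟪θ - s • b i, Γ x⟫)) ν := by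
    apply integrable_finset_sum
    intro i _
    exact ((hint _ (hmem i).1).add (hint _ (hmem i).2)).const_mul _
  have hmeas : AEStronglyMeasurable (fun x => exp ⟪θ, Γ x⟫ • Γ x) ν := by
    exact ((((measurable_const.inner hΓ)).exp).smul hΓ).aestronglyMeasurable
  refine hgint.mono' hmeas (Filter.Eventually.of_forall fun x => ?_)
  have hnorm : ‖Γ x‖ ≤ ∑ i, |⟪b i, Γ x⟫| := by
    calc ‖Γ x‖ = ‖∑ i, ⟪b i, Γ x⟫ • b i‖ := by rw [b.sum_repr']
    _ ≤ ∑ i, ‖⟪b i, Γ x⟫ • b i‖ := norm_sum_le _ _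
    _ = ∑ i, |⟪b i, Γ x⟫| := by
        refine Finset.sum_congr rfl fun i _ => ?_
        rw [norm_smul, b.orthonormal.1 i, mul_one, Real.norm_eq_abs]
  have hkey : ∀ i, exp ⟪θ, Γ x⟫ * |⟪b i, Γ x⟫| ≤
      (1 / s) * (exp ⟪θ + s • b i, Γ x⟫ + exp ⟪θ - s • b i, Γ x⟫) := by
    intro i
    set t : ℝ := ⟪b i, Γ x⟫ with ht
    have h1 : ⟪θ + s • b i, Γ x⟫ = ⟪θ, Γ x⟫ + s * t := by
      rw [inner_add_left, real_inner_smul_left]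
    have h2 : ⟪θ - s • b i, Γ x⟫ = ⟪θ, Γ x⟫ - s * t := by
      rw [inner_sub_left, real_inner_smul_left]
    have habs : s * |t| ≤ exp (s * |t|) := by
      have := Real.add_one_le_exp (s * |t|)
      nlinarith [abs_nonneg t]
    have hexp : exp (s * |t|) ≤ exp (s * t) + exp (- (s * t)) := by
      rcases abs_cases t with ⟨h, _⟩ | ⟨h, _⟩
      · rw [h]; nlinarith [Real.exp_pos (-(s*t))]
      · rw [h, mul_neg]; nlinarith [Real.exp_pos (s*t)]
    have hst : |t| ≤ (1 / s) * (exp (s * t) + exp (- (s * t))) := by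
      rw [one_div, inv_mul_eq_div, le_div_iff₀ hs0, mul_comm]
      exact habs.trans hexp
    calc exp ⟪θ, Γ x⟫ * |t| ≤ exp ⟪θ, Γ x⟫ * ((1 / s) * (exp (s * t) + exp (- (s * t)))) :=
          mul_le_mul_of_nonneg_left hst (Real.exp_pos _).le
      _ = (1 / s) * (exp ⟪θ + s • b i, Γ x⟫ + exp ⟪θ - s • b i, Γ x⟫) := by
          rw [h1, h2, Real.exp_add, Real.exp_sub, Real.exp_neg]
          field_simp
  calc ‖exp ⟪θ, Γ x⟫ • Γ x‖ = exp ⟪θ, Γ x⟫ * ‖Γ x‖ := by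
        rw [norm_smul, Real.norm_eq_abs, abs_of_pos (Real.exp_pos _)]
    _ ≤ exp ⟪θ, Γ x⟫ * ∑ i, |⟪b i, Γ x⟫| :=
        mul_le_mul_of_nonneg_left hnorm (Real.exp_pos _).le
    _ = ∑ i, exp ⟪θ, Γ x⟫ * |⟪b i, Γ x⟫| := Finset.mul_sum _ _ _
    _ ≤ ∑ i, (1 / s) * (exp ⟪θ + s • b i, Γ x⟫ + exp ⟪θ - s • b i, Γ x⟫) :=
        Finset.sum_le_sum fun i _ => hkey i

/-- For `θ` in the interior of `Θ` and `θ' ∈ Θ`, the KL divergence between `q_θ` and `q_θ'`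
is well defined and equals the Bregman divergence of the log-partition function `A`
between the parameters: `KL(q_θ, q_θ') = A θ' - A θ - ⟪∇A θ, θ' - θ⟫`, where
`∇A θ = ∫ q_θ(x) Γ(x) dν`. -/
theorem statement3
    {X : Type*} [MeasurableSpace X] (ν : Measure X) [SigmaFinite ν] (hν : ν ≠ 0)
    {H : Type*} [NormedAddCommGroup H] [InnerProductSpace ℝ H] [FiniteDimensional ℝ H]
    [MeasurableSpace H] [BorelSpace H]
    (Γ : X → H) (hΓ : Measurable Γ)
    (Θ : Set H) (hΘ : Θ = {θ : H | Integrable (fun x => exp ⟪θ, Γ x⟫) ν})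
    (A : H → ℝ) (hA : ∀ θ, A θ = log (∫ x, exp ⟪θ, Γ x⟫ ∂ν))
    (q : H → X → ℝ) (hq : ∀ θ x, q θ x = exp (⟪θ, Γ x⟫ - A θ)) :
    ∀ θ ∈ interior Θ, ∀ θ' ∈ Θ,
      Integrable (fun x => q θ x • Γ x) ν ∧
      Integrable (fun x => q θ x * log (q θ x / q θ' x)) ν ∧
      ∫ x, q θ x * log (q θ x / q θ' x) ∂ν
        = A θ' - A θ - ⟪∫ x, q θ x • Γ x ∂ν, θ' - θ⟫ := by
  intro θ hθ θ' hθ'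
  have hθΘ : θ ∈ Θ := interior_subset hθ
  obtain ⟨ε, hε, hball⟩ := Metric.mem_nhds_iff.mp (mem_interior_iff_mem_nhds.mp hθ)
  have hint : ∀ η : H, dist η θ < ε → Integrable (fun x => exp ⟪η, Γ x⟫) ν := by
    intro η h
    have : η ∈ Θ := hball (Metric.mem_ball.mpr h)
    rwa [hΘ] at this
  have hexpθ : Integrable (fun x => exp ⟪θ, Γ x⟫) ν := by rw [hΘ] at hθΘ; exact hθΘ
  have hexpθ' : Integrable (fun x => exp ⟪θ', Γ x⟫) ν := by rw [hΘ] at hθ'; exact hθ'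
  have hI1' : Integrable (fun x => exp ⟪θ, Γ x⟫ • Γ x) ν :=
    aux_integrable_exp_smul hΓ hε hint
  have hqeq : ∀ x, q θ x = exp (- A θ) * exp ⟪θ, Γ x⟫ := by
    intro x; rw [hq, ← Real.exp_add]; ring_nf
  have hI1 : Integrable (fun x => q θ x • Γ x) ν := by
    have : (fun x => q θ x • Γ x) = fun x => exp (- A θ) • (exp ⟪θ, Γ x⟫ • Γ x) := by
      funext x; rw [smul_smul, hqeq]
    rw [this]; exact hI1'.smul _
  have hqint : Integrable (fun x => q θ x) ν := by
    have : (fun x => q θ x) = fun x => exp (- A θ) * exp ⟪θ, Γ x⟫ := funext hqeq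
    rw [this]; exact hexpθ.const_mul _
  have hlog : ∀ x, log (q θ x / q θ' x) = ⟪θ - θ', Γ x⟫ + (A θ' - A θ) := by
    intro x
    rw [hq, hq, ← Real.exp_sub, Real.log_exp, inner_sub_left]
    ring
  have hrw : (fun x => q θ x * log (q θ x / q θ' x)) =
      fun x => ⟪θ - θ', q θ x • Γ x⟫ + (A θ' - A θ) * q θ x := by
    funext x
    rw [hlog, real_inner_smul_right]
    ring
  have hI2 : Integrable (fun x => q θ x * log (q θ x / q θ' x)) ν := by
    rw [hrw]
    exact (hI1.const_inner _).add (hqint.const_mul _)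
  refine ⟨hI1, hI2, ?_⟩
  have hZpos : 0 < ∫ x, exp ⟪θ, Γ x⟫ ∂ν := by
    rw [integral_pos_iff_support_of_nonneg_ae
      (Filter.Eventually.of_forall fun x => (Real.exp_pos _).le) hexpθ]
    have : Function.support (fun x => exp ⟪θ, Γ x⟫) = Set.univ := by
      ext x; simp [Function.mem_support, (Real.exp_pos _).ne']
    rw [this]
    simpa [pos_iff_ne_zero] using (Measure.measure_univ_eq_zero).not.mpr hν
  have hqone : ∫ x, q θ x ∂ν = 1 := by
    have : (fun x => q θ x) = fun x => exp (- A θ) * exp ⟪θ, Γ x⟫ := funext hqeq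
    rw [this, integral_const_mul, hA, Real.exp_neg, Real.exp_log hZpos,
      inv_mul_cancel₀ hZpos.ne']
  rw [hrw, integral_add (hI1.const_inner _) (hqint.const_mul _),
    integral_inner hI1, integral_const_mul, hqone, mul_one]
  have : ⟪θ - θ', ∫ x, q θ x • Γ x ∂ν⟫ = - ⟪∫ x, q θ x • Γ x ∂ν, θ' - θ⟫ := by
    rw [real_inner_comm, ← inner_neg_right, neg_sub]
  rw [this]; ring
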